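/- Let f₁,…,fₙ : ℝ^d → ℝ be differentiable and satisfy the average smoothness condition with constant L > 0. Let n ≥ 1 and 1 ≤ b ≤ n be integers, let I be a uniformly random b-element subset of {1,…,n}, fix x ∈ ℝ^d and stored points y₁,…,yₙ ∈ ℝ^d, and for each subset I define yᵢ^I = x if i ∈ I and yᵢ^I = yᵢ otherwise. Then for any function x⁺ assigning to each b-element subset I a point x⁺(I) ∈ ℝ^d, one has E[(1/(bn))∑_{i=1}^n ‖∇fᵢ(x⁺(I)) − ∇fᵢ(yᵢ^I)‖²] ≤ (1 − b/(2n))·(1/(bn))∑_{i=1}^n ‖∇fᵢ(x) − ∇fᵢ(yᵢ)‖² + ((2n − b)L²/b²)·E‖x⁺(I) − x‖², where E denotes the average over all b-element subsets I of {1,…,n}. -/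

import Mathlib

private lemma young_ineq {E : Type*} [NormedAddCommGroup E]
    (a b : E) (β : ℝ) (hβ : 0 < β) :
    ‖a + b‖ ^ 2 ≤ (1 + β⁻¹) * ‖a‖ ^ 2 + (1 + β) * ‖b‖ ^ 2 := by
  have h := norm_add_le a b
  have h2 : ‖a + b‖^2 ≤ (‖a‖ + ‖b‖)^2 := by
    apply pow_le_pow_left₀ (norm_nonneg _) h
  have hinv : β * β⁻¹ = 1 := mul_inv_cancel₀ hβ.ne'
  nlinarith [sq_nonneg (‖a‖ - β * ‖b‖), norm_nonneg a, norm_nonneg b,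
    mul_pos hβ (inv_pos.mpr hβ)]

/-- One-step recursion for the quantity ϒ of MM-SAGA.
`f₁, …, fₙ` satisfy the average smoothness condition with constant `L > 0`; `I` ranges uniformly
over all `b`-element subsets of `{1, …, n}` (expectation = average over the `n.choose b` subsets);
`yᵢ^I = x` if `i ∈ I`, else `yᵢ`. Then for any assignment `I ↦ x⁺(I)`:
`E[(1/(bn)) ∑ᵢ ‖∇fᵢ(x⁺(I)) − ∇fᵢ(yᵢ^I)‖²]
  ≤ (1 − b/(2n))·(1/(bn)) ∑ᵢ ‖∇fᵢ(x) − ∇fᵢ(yᵢ)‖² + ((2n − b)L²/b²)·E‖x⁺(I) − x‖²`. -/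
theorem stmt_3 (d n b : ℕ) (hn : 0 < n) (hb : 0 < b) (hbn : b ≤ n) (L : ℝ) (hL : 0 < L)
    (f : Fin n → EuclideanSpace ℝ (Fin d) → ℝ)
    (hf : ∀ i, Differentiable ℝ (f i))
    (hsmooth : ∀ x y : EuclideanSpace ℝ (Fin d),
      (1 / (n : ℝ)) * ∑ i, ‖gradient (f i) x - gradient (f i) y‖ ^ 2 ≤
        L ^ 2 * ‖x - y‖ ^ 2)
    (x : EuclideanSpace ℝ (Fin d)) (y : Fin n → EuclideanSpace ℝ (Fin d))
    (xp : Finset (Fin n) → EuclideanSpace ℝ (Fin d)) :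
    (1 / (n.choose b : ℝ)) *
        ∑ I ∈ Finset.powersetCard b (Finset.univ : Finset (Fin n)),
          ((1 / ((b : ℝ) * (n : ℝ))) *
            ∑ i, ‖gradient (f i) (xp I) -
              gradient (f i) (if i ∈ I then x else y i)‖ ^ 2) ≤
      (1 - (b : ℝ) / (2 * (n : ℝ))) *
          ((1 / ((b : ℝ) * (n : ℝ))) *
            ∑ i, ‖gradient (f i) x - gradient (f i) (y i)‖ ^ 2) +
        ((2 * (n : ℝ) - (b : ℝ)) * L ^ 2 / (b : ℝ) ^ 2) *
          ((1 / (n.choose b : ℝ)) *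
            ∑ I ∈ Finset.powersetCard b (Finset.univ : Finset (Fin n)),
              ‖xp I - x‖ ^ 2) := by
  classical
  have hn' : (0:ℝ) < n := by exact_mod_cast hn
  have hb' : (0:ℝ) < b := by exact_mod_cast hb
  have hbn' : (b:ℝ) ≤ n := by exact_mod_cast hbn
  have hN : (0:ℝ) < (n.choose b : ℝ) := by exact_mod_cast Nat.choose_pos hbn
  set PS := Finset.powersetCard b (Finset.univ : Finset (Fin n)) with hPS
  set g : Fin n → ℝ := fun i => ‖gradient (f i) x - gradient (f i) (y i)‖ ^ 2 with hg
  have hg0 : ∀ i, 0 ≤ g i := fun i => by positivity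
  have hS0 : 0 ≤ ∑ i, g i := Finset.sum_nonneg (fun i _ => hg0 i)
  set c : ℝ := 1 / ((b : ℝ) * n) with hc
  have hc0 : 0 < c := by positivity
  set α : ℝ := (2*(n:ℝ) - b) / b with hα
  set γ : ℝ := (2*(n:ℝ) - b) / (2*((n:ℝ) - b)) with hγ
  have hγ0 : 0 ≤ γ := by
    rcases lt_or_eq_of_le hbn' with h | h
    · apply div_nonneg <;> linarith
    · rw [hγ, ← h]; simp
  set K : ℝ := (2 * (n:ℝ) - b) * L ^ 2 / (b:ℝ) ^ 2 with hK
  -- Pointwise (per subset I) bound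
  have pointwise : ∀ I ∈ PS,
      c * ∑ i, ‖gradient (f i) (xp I) - gradient (f i) (if i ∈ I then x else y i)‖ ^ 2
        ≤ K * ‖xp I - x‖ ^ 2 + (c * γ) * ∑ i, (if i ∈ I then 0 else g i) := by
    intro I hI
    -- per-coordinate bound
    have hper : ∀ i, ‖gradient (f i) (xp I) - gradient (f i) (if i ∈ I then x else y i)‖ ^ 2
        ≤ α * ‖gradient (f i) (xp I) - gradient (f i) x‖ ^ 2
          + γ * (if i ∈ I then 0 else g i) := by
      intro i
      by_cases hi : i ∈ I
      · simp only [hi, if_true]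
        have hα1 : (1:ℝ) ≤ α := by
          rw [hα, le_div_iff₀ hb']; linarith
        nlinarith [sq_nonneg ‖gradient (f i) (xp I) - gradient (f i) x‖]
      · -- i ∉ I forces b < n
        have hIcard : I.card = b := (Finset.mem_powersetCard.mp hI).2
        have hblt : (b:ℝ) < n := by
          have hss : I ⊂ Finset.univ := by
            refine Finset.ssubset_univ_iff.mpr ?_
            intro h; exact hi (h ▸ Finset.mem_univ i)
          have := Finset.card_lt_card hss
          rw [hIcard, Finset.card_univ, Fintype.card_fin] at this
          exact_mod_cast this
        have hβ : (0:ℝ) < (b:ℝ) / (2*((n:ℝ) - b)) := by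
          apply div_pos hb'; linarith
        have key := young_ineq (gradient (f i) (xp I) - gradient (f i) x)
          (gradient (f i) x - gradient (f i) (y i)) _ hβ
        rw [sub_add_sub_cancel] at key
        have hnb0 : (2*((n:ℝ) - b)) ≠ 0 := ne_of_gt (by linarith)
        have hα' : α = 1 + ((b:ℝ) / (2*((n:ℝ) - b)))⁻¹ := by
          rw [hα]; field_simp; ring
        have hγ' : γ = 1 + (b:ℝ) / (2*((n:ℝ) - b)) := by
          rw [hγ, one_add_div hnb0]; congr 1; ring
        simp only [hi, if_false]
        rw [hα', hγ', hg]
        exact key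
    have hsum : ∑ i, ‖gradient (f i) (xp I) - gradient (f i) (if i ∈ I then x else y i)‖ ^ 2
        ≤ α * ∑ i, ‖gradient (f i) (xp I) - gradient (f i) x‖ ^ 2
          + γ * ∑ i, (if i ∈ I then 0 else g i) := by
      rw [Finset.mul_sum, Finset.mul_sum, ← Finset.sum_add_distrib]
      exact Finset.sum_le_sum (fun i _ => hper i)
    have hsm : ∑ i, ‖gradient (f i) (xp I) - gradient (f i) x‖ ^ 2
        ≤ (n:ℝ) * L ^ 2 * ‖xp I - x‖ ^ 2 := by
      have h0 := hsmooth (xp I) x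
      rw [div_mul_eq_mul_div, one_mul, div_le_iff₀ hn'] at h0
      nlinarith [h0]
    have hα0 : 0 ≤ α := by
      rw [hα]; apply div_nonneg _ hb'.le; linarith
    have hcK : c * α * ((n:ℝ) * L ^ 2) = K := by
      rw [hc, hα, hK]; field_simp
    calc c * ∑ i, ‖gradient (f i) (xp I) - gradient (f i) (if i ∈ I then x else y i)‖ ^ 2
        ≤ c * (α * ((n:ℝ) * L ^ 2 * ‖xp I - x‖ ^ 2)
            + γ * ∑ i, (if i ∈ I then 0 else g i)) := by
          apply mul_le_mul_of_nonneg_left _ hc0.le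
          refine le_trans hsum ?_
          gcongr
      _ = K * ‖xp I - x‖ ^ 2 + (c * γ) * ∑ i, (if i ∈ I then 0 else g i) := by
          rw [← hcK]; ring
  -- Combinatorial identity
  have hcount : ∀ i : Fin n, ∑ I ∈ PS, (if i ∈ I then (0:ℝ) else g i)
      = ((n-1).choose b : ℝ) * g i := by
    intro i
    rw [Finset.sum_ite, Finset.sum_const_zero, zero_add, Finset.sum_const, nsmul_eq_mul]
    congr 2
    have hfil : PS.filter (fun I => ¬ i ∈ I) = Finset.powersetCard b ({i}ᶜ : Finset (Fin n)) := by
      ext J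
      simp only [hPS, Finset.mem_filter, Finset.mem_powersetCard, Finset.subset_univ, true_and,
        Finset.subset_compl_singleton]
      tauto
    rw [hfil, Finset.card_powersetCard]
    congr 1
    simp [Finset.card_compl]
  have hswap : ∑ I ∈ PS, ∑ i, (if i ∈ I then (0:ℝ) else g i)
      = ((n-1).choose b : ℝ) * ∑ i, g i := by
    rw [Finset.sum_comm, Finset.mul_sum]
    exact Finset.sum_congr rfl (fun i _ => hcount i)
  -- choose identity
  have hchoose : (n:ℝ) * ((n-1).choose b : ℝ) = (n.choose b : ℝ) * ((n:ℝ) - b) := by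
    have h1 := Nat.add_one_mul_choose_eq (n-1) b
    have h2 : n - 1 + 1 = n := by omega
    rw [h2] at h1
    have h3 : n * ((n-1).choose b) = n.choose b * (n - b) := by
      rw [h1, Nat.choose_succ_right_eq]
    have := congrArg (fun m : ℕ => (m:ℝ)) h3
    push_cast [Nat.cast_sub hbn] at this
    convert this using 2 <;> push_cast <;> ring
  -- coefficient inequality
  have hcoef : (1 / (n.choose b : ℝ)) * ((c * γ) * (((n-1).choose b : ℝ) * ∑ i, g i))
      ≤ (1 - (b:ℝ) / (2*(n:ℝ))) * (c * ∑ i, g i) := by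
    rcases lt_or_eq_of_le hbn with hlt | heq
    · have hnb : (0:ℝ) < (n:ℝ) - b := by
        have : (b:ℝ) < n := by exact_mod_cast hlt
        linarith
      have hcc : (1 / (n.choose b : ℝ)) * ((c * γ) * ((n-1).choose b : ℝ))
          = (1 - (b:ℝ) / (2*(n:ℝ))) * c := by
        have hM' : ((n-1).choose b : ℝ) = (n.choose b:ℝ)*((n:ℝ)-b)/n := by
          rw [eq_div_iff hn'.ne']; linarith [hchoose]
        rw [hγ, hc, hM']
        field_simp
      have heq : (1 / (n.choose b : ℝ)) * ((c * γ) * (((n-1).choose b : ℝ) * ∑ i, g i))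
          = ((1 / (n.choose b : ℝ)) * ((c * γ) * ((n-1).choose b : ℝ))) * ∑ i, g i := by ring
      rw [heq, hcc]
      exact le_of_eq (by ring)
    · have hM : (n-1).choose b = 0 := Nat.choose_eq_zero_of_lt (by omega)
      rw [hM]
      simp only [Nat.cast_zero, zero_mul, mul_zero]
      apply mul_nonneg _ (mul_nonneg hc0.le hS0)
      have : (b:ℝ) / (2*(n:ℝ)) ≤ 1/2 := by
        rw [div_le_div_iff₀ (by positivity) (by norm_num)]
        linarith
      linarith
  -- assemble
  have hKpos : 0 ≤ K := by
    rw [hK]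
    apply div_nonneg (mul_nonneg (by linarith) (sq_nonneg L)) (by positivity)
  calc (1 / (n.choose b : ℝ)) *
        ∑ I ∈ PS, (c * ∑ i, ‖gradient (f i) (xp I) -
            gradient (f i) (if i ∈ I then x else y i)‖ ^ 2)
      ≤ (1 / (n.choose b : ℝ)) *
        ∑ I ∈ PS, (K * ‖xp I - x‖ ^ 2 + (c * γ) * ∑ i, (if i ∈ I then 0 else g i)) := by
        apply mul_le_mul_of_nonneg_left _ (by positivity)
        exact Finset.sum_le_sum pointwise
    _ = K * ((1 / (n.choose b : ℝ)) * ∑ I ∈ PS, ‖xp I - x‖ ^ 2)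
        + (1 / (n.choose b : ℝ)) * ((c * γ) * (((n-1).choose b : ℝ) * ∑ i, g i)) := by
        rw [Finset.sum_add_distrib, ← Finset.mul_sum, ← Finset.mul_sum, ← hswap]
        ring
    _ ≤ K * ((1 / (n.choose b : ℝ)) * ∑ I ∈ PS, ‖xp I - x‖ ^ 2)
        + (1 - (b:ℝ) / (2*(n:ℝ))) * (c * ∑ i, g i) := by
        linarith [hcoef]
    _ = (1 - (b:ℝ) / (2*(n:ℝ))) * (c * ∑ i, g i)
        + K * ((1 / (n.choose b : ℝ)) * ∑ I ∈ PS, ‖xp I - x‖ ^ 2) := by ring
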